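/- The competitive-equilibrium fairness notion suffers from the inversion paradox for indivisible goods with additive valuations. Concretely, take 3 agents and 3 items e_1, e_2, e_3 with additive valuations v_1 = (6, 5, 4), v_2 = (6, 4, 5), v_3 = (5, 4, 6) (listing item values in order), and entitlement vectors b = (0.36, 0.38, 0.26) and b' = (0.36, 0.34, 0.30). Then b' 3-improves b; there exists a competitive-equilibrium allocation for b, and every competitive-equilibrium allocation for b gives agent 3 value 6 (agent 3 gets e_3); there exists a competitive-equilibrium allocation for b', and every competitive-equilibrium allocation for b' gives agent 3 value only 4 (agent 3 gets e_2). Hence every CE allocation for b gives agent 3 strictly more value than every CE allocation for b', even though b' >_3 b. -/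

import Mathlib

namespace Stmt14

/-- A partition of the items into (possibly empty) bundles. -/
def IsPartition {n m : ℕ} (A : Fin n → Finset (Fin m)) : Prop :=
  (∀ i j, i ≠ j → Disjoint (A i) (A j)) ∧ ∀ e, ∃ i, e ∈ A i

/-- Additive value of a bundle. -/
def bval {m : ℕ} (w : Fin m → ℝ) (S : Finset (Fin m)) : ℝ := ∑ e ∈ S, w e

/-- The additive valuations: v₁ = (6,5,4), v₂ = (6,4,5), v₃ = (5,4,6). -/
def v : Fin 3 → Fin 3 → ℝ := ![![6, 5, 4], ![6, 4, 5], ![5, 4, 6]]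

/-- Entitlement vector b = (0.36, 0.38, 0.26). -/
noncomputable def b : Fin 3 → ℝ := ![0.36, 0.38, 0.26]

/-- Entitlement vector b' = (0.36, 0.34, 0.30). -/
noncomputable def b' : Fin 3 → ℝ := ![0.36, 0.34, 0.30]

/-- A competitive-equilibrium allocation under entitlements `β`: there are
nonnegative item prices making each agent's bundle affordable and of maximal
value among her affordable bundles. -/
noncomputable def CE (β : Fin 3 → ℝ) (A : Fin 3 → Finset (Fin 3)) : Prop :=
  IsPartition A ∧ ∃ p : Fin 3 → ℝ, (∀ e, 0 ≤ p e) ∧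
    ∀ i, (∑ e ∈ A i, p e ≤ β i) ∧
      ∀ S : Finset (Fin 3), (∑ e ∈ S, p e) ≤ β i → bval (v i) S ≤ bval (v i) (A i)

lemma v_pos : ∀ i e : Fin 3, 0 < v i e := by
  intro i e; fin_cases i <;> fin_cases e <;> norm_num [v]

lemma fin3_cases (x : Fin 3) : x = 0 ∨ x = 1 ∨ x = 2 := by fin_cases x <;> simp

lemma ce_struct (β : Fin 3 → ℝ) (hlo : ∀ i, 0.26 ≤ β i) (hhi : ∀ i, β i ≤ 0.38)
    (A : Fin 3 → Finset (Fin 3)) (h : CE β A) :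
    ∃ σ : Fin 3 → Fin 3, Function.Injective σ ∧ (∀ i, A i = {σ i}) ∧
      ∃ p : Fin 3 → ℝ, (∀ e, 0 ≤ p e) ∧ (∀ i, p (σ i) ≤ β i) ∧
        (∀ i e, p e ≤ β i → v i e ≤ v i (σ i)) := by
  obtain ⟨⟨hdisj, hcov⟩, p, hp0, hopt⟩ := h
  have hsing : ∀ i e, p e ≤ β i → v i e ≤ bval (v i) (A i) := by
    intro i e hpe
    have := (hopt i).2 {e} (by simpa using hpe)
    simpa [bval] using this
  have hsum : (A 0).card + (A 1).card + (A 2).card = 3 := by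
    have huniv : (Finset.univ : Finset (Fin 3)) = Finset.univ.biUnion A := by
      ext e
      simp only [Finset.mem_biUnion, Finset.mem_univ, true_and]
      exact ⟨fun _ => hcov e, fun _ => trivial⟩
    have hcard := Finset.card_biUnion (s := (Finset.univ : Finset (Fin 3))) (t := A)
      (fun i _ j _ hij => hdisj i j hij)
    rw [← huniv] at hcard
    simpa [Fin.sum_univ_three] using hcard.symm
  have hne : ∀ j, (A j).Nonempty := by
    intro j
    by_contra hemp
    rw [Finset.not_nonempty_iff_eq_empty] at hemp
    have hbig : ∀ e, β j < p e := by
      intro e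
      by_contra hle
      push_neg at hle
      have h1 := hsing j e hle
      rw [hemp] at h1
      simp [bval] at h1
      exact absurd h1 (not_le.mpr (v_pos j e))
    have hex : ∃ i, 2 ≤ (A i).card := by
      by_contra hc
      push_neg at hc
      have h0 := hc 0; have h1 := hc 1; have h2 := hc 2
      have hj0 : (A j).card = 0 := by rw [hemp]; simp
      rcases fin3_cases j with hj | hj | hj <;> rw [hj] at hj0 <;> omega
    obtain ⟨i, hi⟩ := hex
    obtain ⟨a, ha, c, hcA, hac⟩ := Finset.one_lt_card.mp hi
    have hsub : ({a, c} : Finset (Fin 3)) ⊆ A i := by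
      intro x hx
      simp only [Finset.mem_insert, Finset.mem_singleton] at hx
      rcases hx with h | h <;> subst h <;> assumption
    have h1 : p a + p c ≤ ∑ e ∈ A i, p e := by
      have := Finset.sum_le_sum_of_subset_of_nonneg hsub (fun x _ _ => hp0 x)
      simpa [Finset.sum_pair hac] using this
    have h2 : ∑ e ∈ A i, p e ≤ β i := (hopt i).1
    have ha' := hbig a; have hc' := hbig c
    have hlj := hlo j; have hhi' := hhi i
    linarith
  have hc1 : ∀ i, (A i).card = 1 := by
    have h0 := Finset.Nonempty.card_pos (hne 0)
    have h1 := Finset.Nonempty.card_pos (hne 1)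
    have h2 := Finset.Nonempty.card_pos (hne 2)
    intro i
    rcases fin3_cases i with hi | hi | hi <;> subst hi <;> omega
  choose σ hσ using fun i => Finset.card_eq_one.mp (hc1 i)
  refine ⟨σ, ?_, hσ, p, hp0, ?_, ?_⟩
  · intro i j hij
    by_contra hne'
    have hd := hdisj i j hne'
    rw [hσ i, hσ j, hij] at hd
    simp at hd
  · intro i
    have := (hopt i).1
    rw [hσ i] at this
    simpa using this
  · intro i e hpe
    have := hsing i e hpe
    rw [hσ i] at this
    simpa [bval] using this

lemma uniq_b (A : Fin 3 → Finset (Fin 3)) (h : CE b A) : A 2 = {2} := by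
  obtain ⟨σ, hinj, hA, p, hp0, hbud, haff⟩ :=
    ce_struct b (by intro i; fin_cases i <;> norm_num [b]) (by intro i; fin_cases i <;> norm_num [b]) A h
  have hb0 : b 0 = 0.36 := by norm_num [b]
  have hb1 : b 1 = 0.38 := by norm_num [b]
  have hb2 : b 2 = 0.26 := by norm_num [b, Matrix.cons_val_two]
  suffices hs : σ 2 = 2 by rw [hA 2, hs]
  rcases fin3_cases (σ 2) with h2 | h2 | h2
  · -- agent 3 gets item 0 : impossible
    exfalso
    have hp0' : p 0 ≤ b 2 := by have := hbud 2; rwa [h2] at this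
    have := haff 0 0 (by rw [hb0]; rw [hb2] at hp0'; linarith)
    rcases fin3_cases (σ 0) with h0 | h0 | h0
    · exact absurd (hinj (h0.trans h2.symm)) (by decide)
    · rw [h0] at this; norm_num [v] at this
    · rw [h0] at this; norm_num [v, Matrix.cons_val_two] at this
  · -- agent 3 gets item 1 : impossible
    exfalso
    have hp1' : p 1 ≤ b 2 := by have := hbud 2; rwa [h2] at this
    have hv01 := haff 0 1 (by rw [hb0]; rw [hb2] at hp1'; linarith)
    have hσ0 : σ 0 = 0 := by
      rcases fin3_cases (σ 0) with h0 | h0 | h0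
      · exact h0
      · exact absurd (hinj (h0.trans h2.symm)) (by decide)
      · rw [h0] at hv01; norm_num [v, Matrix.cons_val_two] at hv01
    have hσ1 : σ 1 = 2 := by
      rcases fin3_cases (σ 1) with h1 | h1 | h1
      · exact absurd (hinj (h1.trans hσ0.symm)) (by decide)
      · exact absurd (hinj (h1.trans h2.symm)) (by decide)
      · exact h1
    have hpσ0 : p 0 ≤ b 0 := by have := hbud 0; rwa [hσ0] at this
    have := haff 1 0 (by rw [hb1]; rw [hb0] at hpσ0; linarith)
    rw [hσ1] at this; norm_num [v, Matrix.cons_val_two] at this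
  · exact h2

lemma uniq_b' (A : Fin 3 → Finset (Fin 3)) (h : CE b' A) : A 2 = {1} := by
  obtain ⟨σ, hinj, hA, p, hp0, hbud, haff⟩ :=
    ce_struct b' (by intro i; fin_cases i <;> norm_num [b']) (by intro i; fin_cases i <;> norm_num [b']) A h
  have hb0 : b' 0 = 0.36 := by norm_num [b']
  have hb1 : b' 1 = 0.34 := by norm_num [b']
  have hb2 : b' 2 = 0.30 := by norm_num [b', Matrix.cons_val_two]
  suffices hs : σ 2 = 1 by rw [hA 2, hs]
  rcases fin3_cases (σ 2) with h2 | h2 | h2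
  · exfalso
    have hp0' : p 0 ≤ b' 2 := by have := hbud 2; rwa [h2] at this
    have := haff 0 0 (by rw [hb0]; rw [hb2] at hp0'; linarith)
    rcases fin3_cases (σ 0) with h0 | h0 | h0
    · exact absurd (hinj (h0.trans h2.symm)) (by decide)
    · rw [h0] at this; norm_num [v] at this
    · rw [h0] at this; norm_num [v, Matrix.cons_val_two] at this
  · exact h2
  · exfalso
    have hp2' : p 2 ≤ b' 2 := by have := hbud 2; rwa [h2] at this
    have hv12 := haff 1 2 (by rw [hb1]; rw [hb2] at hp2'; linarith)
    have hσ1 : σ 1 = 0 := by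
      rcases fin3_cases (σ 1) with h1 | h1 | h1
      · exact h1
      · rw [h1] at hv12; norm_num [v, Matrix.cons_val_two] at hv12
      · exact absurd (hinj (h1.trans h2.symm)) (by decide)
    have hσ0 : σ 0 = 1 := by
      rcases fin3_cases (σ 0) with h0 | h0 | h0
      · exact absurd (hinj (h0.trans hσ1.symm)) (by decide)
      · exact h0
      · exact absurd (hinj (h0.trans h2.symm)) (by decide)
    have hpσ1 : p 0 ≤ b' 1 := by have := hbud 1; rwa [hσ1] at this
    have := haff 0 0 (by rw [hb0]; rw [hb1] at hpσ1; linarith)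
    rw [hσ0] at this; norm_num [v] at this

lemma exists_b : ∃ A, CE b A := by
  refine ⟨![{1}, {0}, {2}], ⟨⟨?_, ?_⟩, ![0.38, 0.36, 0.26], ?_, ?_⟩⟩
  · intro i j hij; fin_cases i <;> fin_cases j <;> simp_all <;> decide
  · intro e; fin_cases e
    · exact ⟨1, by decide⟩
    · exact ⟨0, by decide⟩
    · exact ⟨2, by decide⟩
  · intro e; fin_cases e <;> norm_num
  · intro i
    fin_cases i <;>
      refine ⟨by norm_num [b, Matrix.cons_val_two], fun S hS => ?_⟩ <;>
      fin_cases S <;>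
      simp_all [bval, v, b, Finset.sum_insert, Finset.mem_insert] <;>
      norm_num at * <;> linarith

lemma exists_b' : ∃ A, CE b' A := by
  refine ⟨![{0}, {2}, {1}], ⟨⟨?_, ?_⟩, ![0.36, 0.30, 0.34], ?_, ?_⟩⟩
  · intro i j hij; fin_cases i <;> fin_cases j <;> simp_all <;> decide
  · intro e; fin_cases e
    · exact ⟨0, by decide⟩
    · exact ⟨2, by decide⟩
    · exact ⟨1, by decide⟩
  · intro e; fin_cases e <;> norm_num
  · intro i
    fin_cases i <;>
      refine ⟨by norm_num [b', Matrix.cons_val_two], fun S hS => ?_⟩ <;>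
      fin_cases S <;>
      simp_all [bval, v, b', Finset.sum_insert, Finset.mem_insert] <;>
      norm_num at * <;> linarith

/-- CE suffers from the inversion paradox: b' 3-improves b, yet
every CE allocation for b gives agent 3 the item e₃ of value 6, while every
CE allocation for b' gives agent 3 the item e₂ of value only 4. -/
theorem stmt_14 :
    -- b' 3-improves b
    (b 2 < b' 2 ∧ ∀ j, j ≠ 2 → b' j ≤ b j) ∧
    -- CE allocations for b exist, all giving agent 3 the bundle {e₃} of value 6
    (∃ A, CE b A) ∧
    (∀ A, CE b A → A 2 = {2} ∧ bval (v 2) (A 2) = 6) ∧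
    -- CE allocations for b' exist, all giving agent 3 the bundle {e₂} of value 4
    (∃ A, CE b' A) ∧
    (∀ A, CE b' A → A 2 = {1} ∧ bval (v 2) (A 2) = 4) ∧
    -- hence the inversion: agent 3 gets strictly more under b than under b'
    (∀ A A', CE b A → CE b' A' → bval (v 2) (A' 2) < bval (v 2) (A 2)) := by
  have hval2 : ∀ A, CE b A → bval (v 2) (A 2) = 6 := by
    intro A hA; rw [uniq_b A hA]; norm_num [bval, v, Matrix.cons_val_two]
  have hval2' : ∀ A, CE b' A → bval (v 2) (A 2) = 4 := by
    intro A hA; rw [uniq_b' A hA]; norm_num [bval, v, Matrix.cons_val_two]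
  refine ⟨⟨by norm_num [b, b', Matrix.cons_val_two], ?_⟩, exists_b, fun A hA => ⟨uniq_b A hA, hval2 A hA⟩,
    exists_b', fun A hA => ⟨uniq_b' A hA, hval2' A hA⟩, fun A A' hA hA' => ?_⟩
  · intro j hj; fin_cases j <;> simp_all <;> norm_num [b, b']
  · rw [hval2 A hA, hval2' A' hA']; norm_num

end Stmt14
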